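/- Let R be a commutative unital ring whose nilradical 𝔫 satisfies 𝔫^d = 0 for some integer d ≥ 1, and let n ≥ 1. Then the kernel of the natural group homomorphism GL_n(R) → GL_n(R/𝔫) induced by the quotient map R → R/𝔫 is a nilpotent group. -/

import Mathlib

open Matrix
open scoped commutatorElement

variable {R : Type} [CommRing R] {n : ℕ}

private lemma entry_mul_left_mem (I : Ideal R) {N : Matrix (Fin n) (Fin n) R}
    (h : ∀ i j, N i j ∈ I) (M : Matrix (Fin n) (Fin n) R) (i j : Fin n) :
    (M * N) i j ∈ I := by
  rw [Matrix.mul_apply]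
  exact Ideal.sum_mem _ fun k _ => I.mul_mem_left _ (h k j)

private lemma entry_mul_right_mem (I : Ideal R) {M : Matrix (Fin n) (Fin n) R}
    (h : ∀ i j, M i j ∈ I) (N : Matrix (Fin n) (Fin n) R) (i j : Fin n) :
    (M * N) i j ∈ I := by
  rw [Matrix.mul_apply]
  exact Ideal.sum_mem _ fun k _ => I.mul_mem_right _ (h i k)

/-- The congruence subgroup of level `I^k`. -/
private def congSubgroup (R : Type) [CommRing R] (n : ℕ) (I : Ideal R) (k : ℕ) :
    Subgroup (Matrix.GeneralLinearGroup (Fin n) R) where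
  carrier := {g | ∀ i j, ((g : Matrix (Fin n) (Fin n) R) - 1) i j ∈ I ^ k}
  one_mem' := by intro i j; simp
  mul_mem' := by
    intro g h hg hh i j
    have key : ((↑(g * h) : Matrix (Fin n) (Fin n) R) - 1) =
        ((g : Matrix (Fin n) (Fin n) R) - 1) * ((h : Matrix (Fin n) (Fin n) R) - 1) +
          ((g : Matrix (Fin n) (Fin n) R) - 1) + ((h : Matrix (Fin n) (Fin n) R) - 1) := by
      simp only [Units.val_mul]
      noncomm_ring
    rw [key]
    simp only [Matrix.add_apply]
    exact add_mem (add_mem (entry_mul_left_mem _ hh _ i j) (hg i j)) (hh i j)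
  inv_mem' := by
    intro g hg i j
    have h1 : ((↑g⁻¹ : Matrix (Fin n) (Fin n) R)) * (g : Matrix (Fin n) (Fin n) R) = 1 := by
      exact_mod_cast g.inv_mul
    have key : ((↑g⁻¹ : Matrix (Fin n) (Fin n) R) - 1) =
        -((↑g⁻¹ : Matrix (Fin n) (Fin n) R) * ((g : Matrix (Fin n) (Fin n) R) - 1)) := by
      rw [mul_sub, h1, mul_one, neg_sub]
    rw [key]
    simp only [Matrix.neg_apply]
    exact neg_mem (entry_mul_left_mem _ hg _ i j)

private lemma commutator_mem_congSubgroup (I : Ideal R) (a b : ℕ)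
    {g h : Matrix.GeneralLinearGroup (Fin n) R}
    (hg : g ∈ congSubgroup R n I a) (hh : h ∈ congSubgroup R n I b) :
    ⁅g, h⁆ ∈ congSubgroup R n I (a + b) := by
  intro i j
  set A : Matrix (Fin n) (Fin n) R := (g : Matrix (Fin n) (Fin n) R) - 1 with hA
  set B : Matrix (Fin n) (Fin n) R := (h : Matrix (Fin n) (Fin n) R) - 1 with hB
  have hcomm : ⁅g, h⁆ = (g * h) * (h * g)⁻¹ := by
    rw [commutatorElement_def, _root_.mul_inv_rev, mul_assoc]
  have hu : ((h * g : Matrix.GeneralLinearGroup (Fin n) R) : Matrix (Fin n) (Fin n) R) *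
      ((↑(h * g)⁻¹ : Matrix (Fin n) (Fin n) R)) = 1 := by
    exact_mod_cast (h * g).mul_inv
  have hAB : ∀ i j, (A * B - B * A) i j ∈ I ^ (a + b) := by
    intro i j
    rw [Matrix.sub_apply, pow_add]
    refine sub_mem ?_ ?_
    · rw [Matrix.mul_apply]
      exact Ideal.sum_mem _ fun k _ => Ideal.mul_mem_mul (hg i k) (hh k j)
    · rw [Matrix.mul_apply, mul_comm (I ^ a)]
      exact Ideal.sum_mem _ fun k _ => Ideal.mul_mem_mul (hh i k) (hg k j)
  have key : ((↑⁅g, h⁆ : Matrix (Fin n) (Fin n) R) - 1) =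
      (A * B - B * A) * ((↑(h * g)⁻¹ : Matrix (Fin n) (Fin n) R)) := by
    have e2 : A * B - B * A =
        ((g * h : Matrix.GeneralLinearGroup (Fin n) R) : Matrix (Fin n) (Fin n) R) -
        ((h * g : Matrix.GeneralLinearGroup (Fin n) R) : Matrix (Fin n) (Fin n) R) := by
      simp only [hA, hB, Units.val_mul]
      noncomm_ring
    rw [hcomm, Units.val_mul, e2, sub_mul, hu, Units.val_mul]
  rw [key]
  exact entry_mul_right_mem _ hAB _ i j

private lemma ker_le_cong1 (R : Type) [CommRing R] (n : ℕ)
    {g : Matrix.GeneralLinearGroup (Fin n) R}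
    (hg : g ∈ (Matrix.GeneralLinearGroup.map (Ideal.Quotient.mk (nilradical R)) :
        Matrix.GeneralLinearGroup (Fin n) R →*
          Matrix.GeneralLinearGroup (Fin n) (R ⧸ nilradical R)).ker) :
    g ∈ congSubgroup R n (nilradical R) 1 := by
  intro i j
  rw [MonoidHom.mem_ker] at hg
  have h1 : ((g : Matrix (Fin n) (Fin n) R)).map (Ideal.Quotient.mk (nilradical R)) = 1 := by
    have := congrArg Units.val hg
    simpa [Matrix.GeneralLinearGroup.map, RingHom.mapMatrix_apply] using this
  have h2 := congrFun (congrFun h1 i) j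
  rw [pow_one, ← Ideal.Quotient.eq_zero_iff_mem]
  simp only [Matrix.sub_apply, map_sub, Matrix.map_apply] at h2 ⊢
  rw [h2]
  by_cases hij : i = j <;> simp [Matrix.one_apply, hij]

/-- If the nilradical `𝔫` of a commutative unital ring `R` satisfies `𝔫^d = 0` for some
`d ≥ 1`, then the kernel of the natural homomorphism `GL_n(R) → GL_n(R/𝔫)` is a nilpotent
group. -/
theorem ker_glMap_nilradical_isNilpotent
    (R : Type) [CommRing R] (d : ℕ) (hd : 1 ≤ d) (hnil : (nilradical R) ^ d = ⊥)
    (n : ℕ) (hn : 1 ≤ n) :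
    Group.IsNilpotent
      ↥((Matrix.GeneralLinearGroup.map (Ideal.Quotient.mk (nilradical R)) :
          Matrix.GeneralLinearGroup (Fin n) R →*
            Matrix.GeneralLinearGroup (Fin n) (R ⧸ nilradical R)).ker) := by
  set K := (Matrix.GeneralLinearGroup.map (Ideal.Quotient.mk (nilradical R)) :
      Matrix.GeneralLinearGroup (Fin n) R →*
        Matrix.GeneralLinearGroup (Fin n) (R ⧸ nilradical R)).ker with hK
  rw [nilpotent_iff_lowerCentralSeries]
  refine ⟨d - 1, ?_⟩
  have main : ∀ m : ℕ, (⊤ : Subgroup ↥K).lowerCentralSeries m ≤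
      (congSubgroup R n (nilradical R) (m + 1)).comap K.subtype := by
    intro m
    induction m with
    | zero =>
      intro g _
      exact ker_le_cong1 R n g.2
    | succ m ih =>
      rw [Subgroup.lowerCentralSeries_succ, Subgroup.commutator_def]
      rw [Subgroup.closure_le]
      rintro x ⟨g, hg, h, -, rfl⟩
      show ⁅g, h⁆ ∈ _
      simp only [SetLike.mem_coe, Subgroup.mem_comap, map_commutatorElement]
      exact commutator_mem_congSubgroup (nilradical R) (m + 1) 1
        (ih hg) (ker_le_cong1 R n h.2)
  have hle := main (d - 1)
  rw [Nat.sub_add_cancel hd] at hle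
  rw [eq_bot_iff]
  intro g hg
  have hc := hle hg
  rw [Subgroup.mem_comap] at hc
  rw [Subgroup.mem_bot]
  ext i j
  have := hc i j
  rw [hnil, Ideal.mem_bot, Matrix.sub_apply, sub_eq_zero] at this
  simpa using this
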